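/- Let ρ_i = |i⟩⟨i| for i = 1,...,m be m distinct computational-basis projectors on C^(2^n), labeled y_i = +1 for i ≤ m/2 and y_i = -1 for i > m/2 (m even). If a Hermitian operator O' and threshold b' ∈ ℝ satisfy y_i·(Tr[O'ρ_i] - b') ≥ γ' for all i, then ||O'||_F ≥ γ'·√m. In particular no observable with Frobenius norm strictly less than η can achieve margin η/√m on these examples. -/

import Mathlib

/-- The Frobenius norm of a complex matrix, `‖A‖_F = √(Tr[Aᴴ A])`. -/
noncomputable def frobeniusNorm {N : ℕ} (A : Matrix (Fin N) (Fin N) ℂ) : ℝ :=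
  Real.sqrt ((A.conjTranspose * A).trace).re

/-- If `ρ_i = |f i⟩⟨f i|` are `m` distinct computational-basis projectors labeled
`+1` for `i < m/2` and `-1` otherwise (`m` even), and a Hermitian `O'` with threshold
`b'` achieves margin `γ'` on all of them, then `‖O'‖_F ≥ γ'·√m`; in particular no
observable of Frobenius norm `< η` achieves margin `η/√m` on these examples. -/
theorem stmt_4 (n m : ℕ) (hm : 0 < m) (hm2 : m ≤ 2^n) (hme : Even m)
    (f : Fin m → Fin (2^n)) (hf : Function.Injective f)
    (O' : Matrix (Fin (2^n)) (Fin (2^n)) ℂ) (hO' : O'.IsHermitian) (b' γ' : ℝ)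
    (hmargin : ∀ i : Fin m,
      (if (i : ℕ) < m / 2 then (1 : ℝ) else -1) *
          (((O' * Matrix.single (f i) (f i) (1 : ℂ)).trace).re - b') ≥ γ') :
    frobeniusNorm O' ≥ γ' * Real.sqrt m ∧
      ∀ η : ℝ, 0 < η → frobeniusNorm O' < η → γ' < η / Real.sqrt m := by
  classical
  set d : Fin m → ℝ := fun i => (O' (f i) (f i)).re with hd
  set ε : Fin m → ℝ := fun i => if (i : ℕ) < m / 2 then 1 else -1 with hε
  -- trace of O' * |j⟩⟨j| is the diagonal entry
  have htr : ∀ i : Fin m,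
      ((O' * Matrix.single (f i) (f i) (1 : ℂ)).trace).re = d i := by
    intro i
    have : (O' * Matrix.single (f i) (f i) (1 : ℂ)).trace = O' (f i) (f i) := by
      simp [Matrix.trace, Matrix.diag, Matrix.mul_apply, Matrix.single,
        Matrix.of_apply, ite_and]
    rw [this]
  -- sum of labels is zero
  have hdiv : m / 2 * 2 = m := Nat.div_mul_cancel hme.two_dvd
  have hεsum : ∑ i : Fin m, ε i = 0 := by
    rw [hε]
    rw [Fin.sum_univ_eq_sum_range (fun k => if k < m / 2 then (1 : ℝ) else -1) m]
    rw [← Finset.sum_range_add_sum_Ico _ (Nat.div_le_self m 2)]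
    have h1 : ∑ k ∈ Finset.range (m / 2), (if k < m / 2 then (1 : ℝ) else -1)
        = ((m / 2 : ℕ) : ℝ) :=
      (Finset.sum_congr rfl fun k hk => if_pos (Finset.mem_range.mp hk)).trans (by simp)
    have h2 : ∑ k ∈ Finset.Ico (m / 2) m, (if k < m / 2 then (1 : ℝ) else -1)
        = -((m - m / 2 : ℕ) : ℝ) :=
      (Finset.sum_congr rfl fun k hk =>
        if_neg (by have := (Finset.mem_Ico.mp hk).1; omega)).trans (by simp [Nat.card_Ico])
    rw [h1, h2]
    have h3 : m - m / 2 = m / 2 := by omega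
    rw [h3]; ring
  -- main inequality on signed sum
  have h1 : (m : ℝ) * γ' ≤ ∑ i : Fin m, ε i * d i := by
    have step : (m : ℝ) * γ' ≤ ∑ i : Fin m, ε i * (d i - b') := by
      calc (m : ℝ) * γ' = ∑ _i : Fin m, γ' := by simp [mul_comm]
        _ ≤ ∑ i : Fin m, ε i * (d i - b') := Finset.sum_le_sum (fun i _ => by
            have := hmargin i
            rw [htr i] at this
            exact this)
    calc (m : ℝ) * γ' ≤ ∑ i : Fin m, ε i * (d i - b') := step
      _ = ∑ i : Fin m, ε i * d i - (∑ i : Fin m, ε i) * b' := by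
          rw [Finset.sum_mul, ← Finset.sum_sub_distrib]
          exact Finset.sum_congr rfl (fun i _ => by ring)
      _ = ∑ i : Fin m, ε i * d i := by rw [hεsum]; ring
  -- Cauchy–Schwarz
  have hε2 : ∑ i : Fin m, ε i ^ 2 = (m : ℝ) := by
    have : ∀ i : Fin m, ε i ^ 2 = 1 := by
      intro i; rw [hε]; dsimp only; split <;> norm_num
    rw [Finset.sum_congr rfl (fun i _ => this i)]; simp
  have hcs : (∑ i : Fin m, ε i * d i) ^ 2 ≤ (m : ℝ) * ∑ i : Fin m, d i ^ 2 := by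
    have := Finset.sum_mul_sq_le_sq_mul_sq Finset.univ ε d
    rw [hε2] at this
    exact this
  -- diagonal sum bounded by Frobenius norm squared
  have htrF : ((O'.conjTranspose * O').trace).re
      = ∑ j : Fin (2 ^ n), ∑ k : Fin (2 ^ n), Complex.normSq (O' k j) := by
    simp [Matrix.trace, Matrix.diag, Matrix.mul_apply, Matrix.conjTranspose_apply,
      Complex.normSq_apply, Complex.mul_re]
  have hsum_d : ∑ i : Fin m, d i ^ 2 ≤ ((O'.conjTranspose * O').trace).re := by
    rw [htrF]
    calc ∑ i : Fin m, d i ^ 2 ≤ ∑ i : Fin m, Complex.normSq (O' (f i) (f i)) :=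
          Finset.sum_le_sum (fun i _ => by
            rw [hd]; dsimp only
            rw [Complex.normSq_apply]
            nlinarith [sq_nonneg (O' (f i) (f i)).im])
      _ = ∑ j ∈ Finset.univ.image f, Complex.normSq (O' j j) := by
          rw [Finset.sum_image (fun a _ b _ h => hf h)]
      _ ≤ ∑ j : Fin (2 ^ n), Complex.normSq (O' j j) :=
          Finset.sum_le_sum_of_subset_of_nonneg (Finset.subset_univ _)
            (fun _ _ _ => Complex.normSq_nonneg _)
      _ ≤ ∑ j : Fin (2 ^ n), ∑ k : Fin (2 ^ n), Complex.normSq (O' k j) :=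
          Finset.sum_le_sum (fun j _ =>
            Finset.single_le_sum (f := fun k => Complex.normSq (O' k j))
              (fun k _ => Complex.normSq_nonneg _) (Finset.mem_univ j))
  have hTrnn : 0 ≤ ((O'.conjTranspose * O').trace).re := by
    rw [htrF]
    exact Finset.sum_nonneg fun j _ => Finset.sum_nonneg fun k _ => Complex.normSq_nonneg _
  set F : ℝ := frobeniusNorm O' with hFdef
  have hFnn : 0 ≤ F := Real.sqrt_nonneg _
  have hFsq : F ^ 2 = ((O'.conjTranspose * O').trace).re := by
    rw [hFdef, frobeniusNorm, Real.sq_sqrt hTrnn]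
  set s : ℝ := Real.sqrt m with hsdef
  have hspos : 0 < s := Real.sqrt_pos.mpr (by exact_mod_cast hm)
  have hs2 : s ^ 2 = (m : ℝ) := Real.sq_sqrt (by positivity)
  have key : γ' * s ≤ F := by
    rcases le_or_gt γ' 0 with hγ | hγ
    · have : γ' * s ≤ 0 := mul_nonpos_of_nonpos_of_nonneg hγ hspos.le
      linarith
    · have hm' : (0 : ℝ) < m := by exact_mod_cast hm
      have hSpos : (0 : ℝ) < ∑ i : Fin m, ε i * d i :=
        lt_of_lt_of_le (mul_pos hm' hγ) h1
      have hsq : ((m : ℝ) * γ') ^ 2 ≤ (∑ i : Fin m, ε i * d i) ^ 2 :=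
        pow_le_pow_left₀ (mul_pos hm' hγ).le h1 2
      have hF2 : (γ' * s) ^ 2 ≤ F ^ 2 := by
        have h3 : (m : ℝ) ^ 2 * γ' ^ 2 ≤ (m : ℝ) * F ^ 2 := by
          calc (m : ℝ) ^ 2 * γ' ^ 2 = ((m : ℝ) * γ') ^ 2 := by ring
            _ ≤ (∑ i : Fin m, ε i * d i) ^ 2 := hsq
            _ ≤ (m : ℝ) * ∑ i : Fin m, d i ^ 2 := hcs
            _ ≤ (m : ℝ) * F ^ 2 := by rw [hFsq]; exact mul_le_mul_of_nonneg_left hsum_d hm'.le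
        have : (m : ℝ) * γ' ^ 2 ≤ F ^ 2 := by nlinarith
        calc (γ' * s) ^ 2 = (m : ℝ) * γ' ^ 2 := by rw [mul_pow, hs2]; ring
          _ ≤ F ^ 2 := this
      nlinarith [mul_pos hγ hspos]
  refine ⟨key, fun η hη hFη => ?_⟩
  rw [lt_div_iff₀ hspos]
  exact lt_of_le_of_lt key hFη
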